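/- Theorem (Integral vanishing, paper Theorem 6.6). In the situation of the context: (1) gr_n M = 0 for every n ≥ r_d + 1; (2) if n is not of the form r_i + kp with 1 ≤ i ≤ d and k an integer ≥ 0, then gr_n M = 0; (3) if n is not of the form r_i + kp with 1 ≤ i ≤ d and k an integer ≥ 1, then gr_n M is torsion-free (equivalently, a free R-module). -/

import Mathlib

/-!
Statement 8 (paper Theorem 6.6, "Integral vanishing").

Context as in Statement 4 (the paper's integral filtered Sen theory for the
Breuil--Kisin module of a lattice in a crystalline representation with `K`
unramified and Hodge--Tate weights `r_1 ≤ … ≤ r_d`).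

Conclusions: (1) `gr_n M = 0` for `n ≥ r_d + 1`; (2) `gr_n M = 0` if `n` is not of
the form `r_i + k·p` with `k ≥ 0`; (3) `gr_n M` is torsion-free if `n` is not of the
form `r_i + k·p` with `k ≥ 1`.
-/

open Submodule

noncomputable section

namespace FilSen

variable {R : Type*} [CommRing R] {M : Type*} [AddCommGroup M] [Module R M]

/-- `gr_n M = Fil_n M / Fil_{n-1} M`. -/
abbrev grQ (Fil : ℤ → Submodule R M) (n : ℤ) :=
  ↥(Fil n) ⧸ Submodule.comap (Fil n).subtype (Fil (n - 1))

end FilSen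

open FilSen Polynomial

section Aux

variable {R : Type*} [CommRing R] {M : Type*} [AddCommGroup M] [Module R M]

/-- Key computation: applying `∏_{v∈T} (θ - v)` to `x ∈ Fil n` stays in `Fil n` and is
congruent to `(∏_{v∈T} (n - v)) • x` modulo `Fil (n-1)`. -/
lemma keyC (Fil : ℤ → Submodule R M) (θ : M →ₗ[R] M)
    (hstab : ∀ n : ℤ, ∀ x ∈ Fil n, θ x ∈ Fil n)
    (hGT : ∀ n : ℤ, ∀ x ∈ Fil n, θ x - (n : R) • x ∈ Fil (n - 1))
    (T : Finset ℕ) (n : ℤ) (x : M) (hx : x ∈ Fil n) :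
    (Polynomial.aeval θ (∏ v ∈ T, (Polynomial.X - Polynomial.C ((v : R))))) x ∈ Fil n ∧
      (Polynomial.aeval θ (∏ v ∈ T, (Polynomial.X - Polynomial.C ((v : R))))) x
        - (∏ v ∈ T, ((n : R) - (v : R))) • x ∈ Fil (n - 1) := by
  classical
  induction T using Finset.induction_on with
  | empty =>
      constructor
      · simpa using hx
      · simpa using (Fil (n - 1)).zero_mem
  | insert _ _ ha _ =>
      rename_i a s ih
      obtain ⟨hy, hy'⟩ := ih
      set y := (Polynomial.aeval θ (∏ v ∈ s, (Polynomial.X - Polynomial.C ((v : R))))) x with hydef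
      set c := (∏ v ∈ s, ((n : R) - (v : R))) with hcdef
      have happ : (Polynomial.aeval θ (∏ v ∈ insert a s,
          (Polynomial.X - Polynomial.C ((v : R))))) x = θ y - (a : R) • y := by
        rw [Finset.prod_insert ha, map_mul, Module.End.mul_apply, ← hydef, map_sub,
          Polynomial.aeval_X, Polynomial.aeval_C, LinearMap.sub_apply,
          Module.algebraMap_end_apply]
      constructor
      · rw [happ]
        exact sub_mem (hstab n y hy) (Submodule.smul_mem _ _ hy)
      · rw [happ, Finset.prod_insert ha]
        have hkey : θ y - (a : R) • y - (((n : R) - (a : R)) * c) • x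
            = (θ y - (n : R) • y) + ((n : R) - (a : R)) • (y - c • x) := by
          rw [smul_sub, sub_smul, mul_smul]; abel
        rw [hkey]
        exact add_mem (hGT n y hy) (Submodule.smul_mem _ _ hy')

/-- Lemma A: if `y ∈ Fil m` is killed by `∏_{v∈T} (θ - v)` with all `v > m`, then `y = 0`. -/
lemma lemA [IsDomain R] [CharZero R] [Module.IsTorsionFree R M]
    (Fil : ℤ → Submodule R M) (θ : M →ₗ[R] M)
    (hbot : ∀ n : ℤ, n < 0 → Fil n = ⊥)
    (hstab : ∀ n : ℤ, ∀ x ∈ Fil n, θ x ∈ Fil n)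
    (hGT : ∀ n : ℤ, ∀ x ∈ Fil n, θ x - (n : R) • x ∈ Fil (n - 1))
    (T : Finset ℕ) :
    ∀ (k : ℕ) (m : ℤ), m < (k : ℤ) → ∀ y ∈ Fil m, (∀ v ∈ T, m < (v : ℤ)) →
      (Polynomial.aeval θ (∏ v ∈ T, (Polynomial.X - Polynomial.C ((v : R))))) y = 0 →
      y = 0 := by
  intro k
  induction k with
  | zero =>
      intro m hm y hy _ _
      rw [hbot m (by exact_mod_cast hm)] at hy
      simpa using hy
  | succ k ih =>
      intro m hm y hy hT h0
      by_cases hmk : m < (k : ℤ)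
      · exact ih m hmk y hy hT h0
      · -- the key step
        set c := (∏ v ∈ T, ((m : R) - (v : R))) with hcdef
        have hcy : c • y ∈ Fil (m - 1) := by
          have := (keyC Fil θ hstab hGT T m y hy).2
          rw [h0] at this
          simpa using (Fil (m - 1)).neg_mem this
        have hc0 : c ≠ 0 := by
          rw [hcdef]
          refine Finset.prod_ne_zero_iff.2 fun v hv => ?_
          have hlt := hT v hv
          have : ((m - (v : ℤ) : ℤ) : R) ≠ 0 := by
            rw [Int.cast_ne_zero]
            omega
          intro hcontra
          apply this
          push_cast
          rw [sub_eq_zero] at hcontra ⊢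
          exact_mod_cast hcontra
        have hcy0 : c • y = 0 := by
          refine ih (m - 1) (by omega) (c • y) hcy (fun v hv => by have := hT v hv; omega) ?_
          rw [map_smul, h0, smul_zero]
        rcases smul_eq_zero.mp hcy0 with h | h
        · exact absurd h hc0
        · exact h

variable [IsDomain R] [IsLocalRing R]

/-- A natural number not divisible by `p` is a unit in `R`. -/
lemma isUnit_natCast_of_not_dvd (p : ℕ) [Fact p.Prime] (hp : Irreducible (p : R))
    {m : ℕ} (h : ¬ p ∣ m) : IsUnit (m : R) := by
  by_contra hu
  have hm : (m : R) ∈ IsLocalRing.maximalIdeal R := hu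
  have hpmem : (p : R) ∈ IsLocalRing.maximalIdeal R := hp.not_isUnit
  set k := IsLocalRing.ResidueField R with hk
  have hpk' : ((p : ℕ) : k) = 0 := by
    have h1 : IsLocalRing.residue R ((p : ℕ) : R) = 0 :=
      (IsLocalRing.residue_eq_zero_iff _).2 hpmem
    rwa [map_natCast] at h1
  have hchar : ringChar k = p := CharP.ringChar_of_prime_eq_zero (Fact.out) hpk'
  have hmk' : ((m : ℕ) : k) = 0 := by
    have h1 : IsLocalRing.residue R ((m : ℕ) : R) = 0 :=
      (IsLocalRing.residue_eq_zero_iff _).2 hm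
    rwa [map_natCast] at h1
  have : ringChar k ∣ m := (CharP.cast_eq_zero_iff k (ringChar k) m).1 hmk'
  rw [hchar] at this
  exact h this

/-- If `v ≤ n` and `p ∤ (n - v)`, then `(n : R) - v` is a unit. -/
lemma isUnit_factor (p : ℕ) [Fact p.Prime] (hp : Irreducible (p : R))
    (n : ℤ) (v : ℕ) (hvn : (v : ℤ) ≤ n) (h : ¬ (p : ℤ) ∣ (n - (v : ℤ))) :
    IsUnit ((n : R) - (v : R)) := by
  set m := (n - (v : ℤ)).toNat with hmdef
  have hm : (m : ℤ) = n - (v : ℤ) := Int.toNat_of_nonneg (by omega)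
  have hnd : ¬ p ∣ m := by
    intro ⟨c, hc⟩
    exact h ⟨(c : ℤ), by omega⟩
  have : ((n : R) - (v : R)) = (m : R) := by
    have : ((m : ℤ) : R) = ((n : ℤ) : R) - (((v : ℤ)) : R) := by rw [hm]; push_cast; ring
    push_cast at this ⊢
    exact this.symm
  rw [this]
  exact isUnit_natCast_of_not_dvd p hp hnd

end Aux

theorem integral_vanishing
    {R : Type*} [CommRing R] [IsDomain R] [IsDiscreteValuationRing R] [CharZero R]
    (p : ℕ) [Fact p.Prime] (hp : Irreducible (p : R))
    {M : Type*} [AddCommGroup M] [Module R M] [Module.Free R M] [Module.Finite R M]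
    (d : ℕ) (hd : 0 < d) (hrank : Module.finrank R M = d)
    (r : Fin d → ℕ) (hr : Monotone r)
    (Fil : ℤ → Submodule R M) (hmono : Monotone Fil)
    (hbot : ∀ n : ℤ, n < 0 → Fil n = ⊥)
    (htop : ∀ n : ℤ, ((Finset.univ.sup r : ℕ) : ℤ) ≤ n → Fil n = ⊤)
    (θ : M →ₗ[R] M)
    (hstab : ∀ n : ℤ, ∀ x ∈ Fil n, θ x ∈ Fil n)
    (hGT : ∀ n : ℤ, ∀ x ∈ Fil n, θ x - (n : R) • x ∈ Fil (n - 1))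
    (hchar : LinearMap.charpoly θ = ∏ i : Fin d, (Polynomial.X - Polynomial.C ((r i : R))))
    (hdiag : Polynomial.aeval θ (∏ v ∈ Finset.image r Finset.univ,
        (Polynomial.X - Polynomial.C ((v : R)))) = 0) :
    -- (1) `gr_n M = 0` for `n ≥ r_d + 1`
    (∀ n : ℤ, ((Finset.univ.sup r : ℕ) : ℤ) + 1 ≤ n → ∀ x : grQ Fil n, x = 0) ∧
    -- (2) if `n` is not of the form `r_i + k·p`, `k ≥ 0`, then `gr_n M = 0`
    (∀ n : ℤ, (¬ ∃ (i : Fin d) (k : ℕ), n = (r i : ℤ) + (k : ℤ) * (p : ℤ)) →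
      ∀ x : grQ Fil n, x = 0) ∧
    -- (3) if `n` is not of the form `r_i + k·p`, `k ≥ 1`, then `gr_n M` is
    -- torsion-free
    (∀ n : ℤ, (¬ ∃ (i : Fin d) (k : ℕ), 1 ≤ k ∧ n = (r i : ℤ) + (k : ℤ) * (p : ℤ)) →
      Submodule.torsion R (grQ Fil n) = ⊥) := by
  classical
  set S := Finset.image r Finset.univ with hSdef
  -- generic splitting of the product relation
  have hsplit : ∀ (q : ℕ → Prop) [DecidablePred q] (y : M),
      (Polynomial.aeval θ (∏ v ∈ S.filter (fun v => ¬ q v),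
        (Polynomial.X - Polynomial.C ((v : R)))))
        ((Polynomial.aeval θ (∏ v ∈ S.filter q,
          (Polynomial.X - Polynomial.C ((v : R))))) y) = 0 := by
    intro q _ y
    have hprod : (∏ v ∈ S, (Polynomial.X - Polynomial.C ((v : R))))
        = (∏ v ∈ S.filter (fun v => ¬ q v), (Polynomial.X - Polynomial.C ((v : R))))
          * (∏ v ∈ S.filter q, (Polynomial.X - Polynomial.C ((v : R)))) := by
      rw [mul_comm, Finset.prod_filter_mul_prod_filter_not]
    have h0 : (Polynomial.aeval θ (∏ v ∈ S.filter (fun v => ¬ q v),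
          (Polynomial.X - Polynomial.C ((v : R)))))
        * (Polynomial.aeval θ (∏ v ∈ S.filter q,
          (Polynomial.X - Polynomial.C ((v : R))))) = 0 := by
      rw [← map_mul, ← hprod, hdiag]
    calc _ = ((Polynomial.aeval θ (∏ v ∈ S.filter (fun v => ¬ q v),
          (Polynomial.X - Polynomial.C ((v : R)))))
        * (Polynomial.aeval θ (∏ v ∈ S.filter q,
          (Polynomial.X - Polynomial.C ((v : R)))))) y := rfl
      _ = 0 := by rw [h0]; rfl
  have hdesc : ∀ (n : ℤ) (c : R), IsUnit c → ∀ y : M, c • y ∈ Fil (n - 1) →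
      y ∈ Fil (n - 1) := by
    intro n c hc y hcy
    obtain ⟨u, rfl⟩ := hc
    have := (Fil (n - 1)).smul_mem ((u⁻¹ : Rˣ) : R) hcy
    rwa [smul_smul, Units.inv_mul, one_smul] at this
  -- core for part (2)
  have core2 : ∀ n : ℤ, (¬ ∃ (i : Fin d) (k : ℕ), n = (r i : ℤ) + (k : ℤ) * (p : ℤ)) →
      ∀ y ∈ Fil n, y ∈ Fil (n - 1) := by
    intro n hn y hy
    by_cases hneg : n < 0
    · rw [hbot n hneg, Submodule.mem_bot] at hy
      rw [hy]; exact (Fil (n - 1)).zero_mem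
    · push_neg at hneg
      set S₁ := S.filter (fun v : ℕ => (v : ℤ) ≤ n) with hS₁
      set z := (Polynomial.aeval θ (∏ v ∈ S₁,
        (Polynomial.X - Polynomial.C ((v : R))))) y with hzdef
      obtain ⟨hz1, hz2⟩ := keyC Fil θ hstab hGT S₁ n y hy
      have hz0 : z = 0 := by
        refine lemA Fil θ hbot hstab hGT _ (n + 1).toNat n (by omega) z hz1
          (fun v hv => ?_) (hsplit (fun v : ℕ => (v : ℤ) ≤ n) y)
        rw [Finset.mem_filter] at hv
        omega
      rw [hzdef] at hz0
      rw [hz0, zero_sub] at hz2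
      have hcy : (∏ v ∈ S₁, ((n : R) - (v : R))) • y ∈ Fil (n - 1) := by
        simpa using (Fil (n - 1)).neg_mem hz2
      refine hdesc n _ ?_ y hcy
      refine Finset.prod_induction _ IsUnit (fun a b => IsUnit.mul) isUnit_one ?_
      intro v hv
      rw [hS₁, Finset.mem_filter, hSdef, Finset.mem_image] at hv
      obtain ⟨⟨i, _, rfl⟩, hvn⟩ := hv
      refine isUnit_factor p hp n (r i) hvn ?_
      rintro ⟨k', hk'⟩
      have hppos : (0 : ℤ) < (p : ℤ) := by exact_mod_cast (Fact.out : p.Prime).pos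
      have hk'nonneg : 0 ≤ k' := by nlinarith [hk', hvn, hppos]
      refine hn ⟨i, k'.toNat, ?_⟩
      have hcast : ((k'.toNat : ℕ) : ℤ) = k' := Int.toNat_of_nonneg hk'nonneg
      rw [hcast, mul_comm]
      linarith [hk']
  -- core for part (3)
  have core3 : ∀ n : ℤ,
      (¬ ∃ (i : Fin d) (k : ℕ), 1 ≤ k ∧ n = (r i : ℤ) + (k : ℤ) * (p : ℤ)) →
      ∀ a ∈ nonZeroDivisors R, ∀ y ∈ Fil n, a • y ∈ Fil (n - 1) → y ∈ Fil (n - 1) := by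
    intro n hn a ha y hy hay
    by_cases hneg : n < 0
    · rw [hbot n hneg, Submodule.mem_bot] at hy
      rw [hy]; exact (Fil (n - 1)).zero_mem
    · push_neg at hneg
      set S₁ := S.filter (fun v : ℕ => (v : ℤ) < n) with hS₁
      set z := (Polynomial.aeval θ (∏ v ∈ S₁,
        (Polynomial.X - Polynomial.C ((v : R))))) y with hzdef
      obtain ⟨hz1, hz2⟩ := keyC Fil θ hstab hGT S₁ n y hy
      set c := (∏ v ∈ S₁, ((n : R) - (v : R))) with hcdef
      have hcunit : IsUnit c := by
        refine Finset.prod_induction _ IsUnit (fun a b => IsUnit.mul) isUnit_one ?_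
        intro v hv
        rw [hS₁, Finset.mem_filter, hSdef, Finset.mem_image] at hv
        obtain ⟨⟨i, _, rfl⟩, hvn⟩ := hv
        refine isUnit_factor p hp n (r i) (le_of_lt hvn) ?_
        rintro ⟨k', hk'⟩
        have hppos : (0 : ℤ) < (p : ℤ) := by exact_mod_cast (Fact.out : p.Prime).pos
        have hk'pos : 0 < k' := by nlinarith [hk', hvn, hppos]
        refine hn ⟨i, k'.toNat, by omega, ?_⟩
        have hcast : ((k'.toNat : ℕ) : ℤ) = k' := Int.toNat_of_nonneg hk'pos.le
        rw [hcast, mul_comm]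
        linarith [hk']
      set S₂ := S.filter (fun v : ℕ => ¬ (v : ℤ) < n) with hS₂
      have h0 : (Polynomial.aeval θ (∏ v ∈ S₂,
          (Polynomial.X - Polynomial.C ((v : R))))) z = 0 :=
        hsplit (fun v : ℕ => (v : ℤ) < n) y
      by_cases hex : ∃ v₀ ∈ S₂, (v₀ : ℤ) = n
      · obtain ⟨v₀, hv₀S, hv₀⟩ := hex
        set S₃ := S₂.erase v₀ with hS₃
        have hS₃gt : ∀ v ∈ S₃, n < (v : ℤ) := by
          intro v hv
          rw [hS₃, Finset.mem_erase] at hv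
          obtain ⟨hne, hv2⟩ := hv
          rw [hS₂, Finset.mem_filter] at hv2
          have : (v : ℤ) ≠ n := by
            intro hc; exact hne (by omega)
          omega
        have hprod23 : (∏ v ∈ S₂, (Polynomial.X - Polynomial.C ((v : R))))
            = (∏ v ∈ S₃, (Polynomial.X - Polynomial.C ((v : R))))
              * (Polynomial.X - Polynomial.C ((v₀ : R))) := by
          conv_lhs => rw [← Finset.insert_erase hv₀S,
            Finset.prod_insert (Finset.notMem_erase v₀ S₂)]
          rw [← hS₃]
          exact mul_comm _ _
        set w := θ z - (n : R) • z with hwdef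
        have hv₀R : ((v₀ : ℕ) : R) = ((n : ℤ) : R) := by
          rw [← hv₀]; push_cast; ring
        have hwz : θ z - (v₀ : R) • z = w := by rw [hwdef, hv₀R]
        have hw0later : (Polynomial.aeval θ (∏ v ∈ S₃,
            (Polynomial.X - Polynomial.C ((v : R))))) w = 0 := by
          rw [← hwz]
          have : (Polynomial.aeval θ (∏ v ∈ S₂,
              (Polynomial.X - Polynomial.C ((v : R))))) z
              = (Polynomial.aeval θ (∏ v ∈ S₃,
                (Polynomial.X - Polynomial.C ((v : R))))) (θ z - (v₀ : R) • z) := by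
            rw [hprod23, map_mul, Module.End.mul_apply]
            congr 1
            rw [map_sub, Polynomial.aeval_X, Polynomial.aeval_C, LinearMap.sub_apply,
              Module.algebraMap_end_apply]
          rw [← this, h0]
        have hwFil : w ∈ Fil (n - 1) := hGT n z hz1
        have hw0 : w = 0 :=
          lemA Fil θ hbot hstab hGT _ (n + 1).toNat (n - 1) (by omega) w hwFil
            (fun v hv => by have := hS₃gt v hv; omega) hw0later
        -- now the torsion argument
        have haz : a • z ∈ Fil (n - 1) := by
          have heq : a • z = a • (z - c • y) + c • (a • y) := by
            rw [smul_sub, smul_comm a c y]; abel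
          rw [heq]
          exact add_mem ((Fil (n - 1)).smul_mem a hz2) ((Fil (n - 1)).smul_mem c hay)
        have hazeig : θ (a • z) - (n : R) • (a • z) = 0 := by
          rw [map_smul, smul_comm ((n : R)) a z, ← smul_sub, ← hwdef, hw0, smul_zero]
        have haz0 : a • z = 0 := by
          refine lemA Fil θ hbot hstab hGT {n.toNat} (n + 1).toNat (n - 1) (by omega)
            (a • z) haz (fun v hv => ?_) ?_
          · rw [Finset.mem_singleton] at hv
            subst hv
            omega
          · rw [Finset.prod_singleton, map_sub, Polynomial.aeval_X, Polynomial.aeval_C,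
              LinearMap.sub_apply, Module.algebraMap_end_apply]
            have hcast : ((n.toNat : ℕ) : R) = ((n : ℤ) : R) := by
              have : ((n.toNat : ℕ) : ℤ) = n := by omega
              exact_mod_cast congrArg (fun t : ℤ => ((t : R))) this
            rw [hcast]
            exact hazeig
        have hz0 : z = 0 := by
          rcases smul_eq_zero.mp haz0 with h | h
          · exact absurd h (nonZeroDivisors.ne_zero ha)
          · exact h
        rw [hzdef] at hz0
        rw [hz0, zero_sub] at hz2
        have hcy : c • y ∈ Fil (n - 1) := by simpa using (Fil (n - 1)).neg_mem hz2
        exact hdesc n c hcunit y hcy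
      · push_neg at hex
        have hz0 : z = 0 := by
          refine lemA Fil θ hbot hstab hGT _ (n + 1).toNat n (by omega) z hz1
            (fun v hv => ?_) h0
          have hv' := hv
          rw [hS₂, Finset.mem_filter] at hv'
          have := hex v hv
          omega
        rw [hzdef] at hz0
        rw [hz0, zero_sub] at hz2
        have hcy : c • y ∈ Fil (n - 1) := by simpa using (Fil (n - 1)).neg_mem hz2
        exact hdesc n c hcunit y hcy
  refine ⟨?_, ?_, ?_⟩
  · intro n hn x
    obtain ⟨y, rfl⟩ := Submodule.Quotient.mk_surjective _ x
    rw [Submodule.Quotient.mk_eq_zero, Submodule.mem_comap]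
    have : Fil (n - 1) = ⊤ := htop (n - 1) (by omega)
    rw [this]
    exact Submodule.mem_top
  · intro n hn x
    obtain ⟨y, rfl⟩ := Submodule.Quotient.mk_surjective _ x
    rw [Submodule.Quotient.mk_eq_zero, Submodule.mem_comap]
    exact core2 n hn y.1 y.2
  · intro n hn
    rw [eq_bot_iff]
    intro x hx
    obtain ⟨a, hax⟩ := (Submodule.mem_torsion_iff (R := R) x).1 hx
    obtain ⟨y, rfl⟩ := Submodule.Quotient.mk_surjective _ x
    rw [Submodule.mem_bot, Submodule.Quotient.mk_eq_zero, Submodule.mem_comap]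
    have hay : (a : R) • y.1 ∈ Fil (n - 1) := by
      have : Submodule.Quotient.mk ((a : R) • y) = (0 : grQ Fil n) := by
        rw [Submodule.Quotient.mk_smul]
        exact hax
      rw [Submodule.Quotient.mk_eq_zero, Submodule.mem_comap] at this
      exact this
    exact core3 n hn (a : R) a.2 y.1 y.2 hay
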